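/- Let g(x) = λ(x³ + x) with λ > 0, and let f : [a,b] → ℝ (a < 0 < b) be C^2 with f(0) = f'(0) = 0, f'' > 0 on (0,b], f'' < 0 on [a,0). Then for λ sufficiently small: g(b) < f(b), g(a) > f(a), g > f on an interval (0,b') with 0 < b' < b maximal, and g < f on an interval (a',0) with a < a' < 0 maximal; and the function F defined by F = g on [a',b'], F = f elsewhere, is convex on [0,b] and concave on [a,0], with F'' vanishing only at 0 (where defined). -/

import Mathlib

open Set Topology Filter

lemma convexOn_congr {s : Set ℝ} {f g : ℝ → ℝ} (h : ConvexOn ℝ s f)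
    (he : ∀ x ∈ s, f x = g x) : ConvexOn ℝ s g := by
  refine ⟨h.1, fun x hx y hy p q hp hq hpq => ?_⟩
  rw [← he _ hx, ← he _ hy, ← he _ (h.1 hx hy hp hq hpq)]
  exact h.2 hx hy hp hq hpq

lemma concaveOn_congr {s : Set ℝ} {f g : ℝ → ℝ} (h : ConcaveOn ℝ s f)
    (he : ∀ x ∈ s, f x = g x) : ConcaveOn ℝ s g := by
  refine ⟨h.1, fun x hx y hy p q hp hq hpq => ?_⟩
  rw [← he _ hx, ← he _ hy, ← he _ (h.1 hx hy hp hq hpq)]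
  exact h.2 hx hy hp hq hpq

lemma glue_convex {s : Set ℝ} {f g : ℝ → ℝ} {c : ℝ}
    (hc : c ∈ s) (hf : ConvexOn ℝ s f) (hg : ConvexOn ℝ s g)
    (hge : ∀ x ∈ s, x ≤ c → f x ≤ g x) (heq : g c = f c) :
    ConvexOn ℝ s (fun x => if x ≤ c then g x else f x) := by
  apply convexOn_of_slope_mono_adjacent hf.1
  intro x y z hx hz hxy hyz
  have hy : y ∈ s := hf.1.ordConnected.out hx hz ⟨hxy.le, hyz.le⟩
  have hp : (0:ℝ) < y - x := by linarith
  have hr : (0:ℝ) < z - y := by linarith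
  by_cases hzc : z ≤ c
  · have hyc : y ≤ c := hyz.le.trans hzc
    have hxc : x ≤ c := hxy.le.trans hyc
    simp only [if_pos hzc, if_pos hyc, if_pos hxc]
    exact hg.slope_mono_adjacent hx hz hxy hyz
  · push_neg at hzc
    by_cases hyc : y ≤ c
    · have hxc : x ≤ c := hxy.le.trans hyc
      simp only [if_pos hyc, if_pos hxc, if_neg (not_le.2 hzc)]
      rcases eq_or_lt_of_le hyc with rfl | hyc'
      · have h2 : (f y - f x) / (y - x) ≤ (f z - f y) / (z - y) :=
          hf.slope_mono_adjacent hx hz hxy hyz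
        calc (g y - g x) / (y - x) ≤ (f y - f x) / (y - x) := by
              apply div_le_div_of_nonneg_right _ hp.le
              have := hge x hx hxc; linarith
          _ ≤ (f z - f y) / (z - y) := h2
          _ = (f z - g y) / (z - y) := by rw [heq]
      · have hq : (0:ℝ) < c - y := by linarith
        have hs : (0:ℝ) < z - c := by linarith
        have h1 : (g y - g x) / (y - x) ≤ (g c - g y) / (c - y) :=
          hg.slope_mono_adjacent hx hc hxy hyc'
        have h2 : (f c - f y) / (c - y) ≤ (f z - f c) / (z - c) :=
          hf.slope_mono_adjacent hy hz hyc' hzc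
        have h3 : f y ≤ g y := hge y hy hyc'.le
        rw [div_le_div_iff₀ hp hq] at h1
        rw [div_le_div_iff₀ hq hs] at h2
        rw [div_le_div_iff₀ hp hr]
        have e2 : (g c - g y) * (z - c) ≤ (f z - f c) * (c - y) := by
          have : (g c - g y) * (z - c) ≤ (f c - f y) * (z - c) := by
            apply mul_le_mul_of_nonneg_right _ hs.le
            linarith [heq]
          linarith [h2]
        have e3 : (g y - g x) * (c - y) * (z - c) ≤ (g c - g y) * (y - x) * (z - c) :=
          mul_le_mul_of_nonneg_right h1 hs.le
        have e4 : (g c - g y) * (z - c) * (y - x) ≤ (f z - f c) * (c - y) * (y - x) :=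
          mul_le_mul_of_nonneg_right e2 hp.le
        have e6 : (g y - g x) * (z - c) ≤ (f z - f c) * (y - x) := by
          have e5 : ((g y - g x) * (z - c)) * (c - y) ≤ ((f z - f c) * (y - x)) * (c - y) := by
            nlinarith [e3, e4]
          exact le_of_mul_le_mul_right e5 hq
        nlinarith [h1, e6, heq]
    · push_neg at hyc
      simp only [if_neg (not_le.2 hyc), if_neg (not_le.2 hzc)]
      have h2 : (f y - f x) / (y - x) ≤ (f z - f y) / (z - y) :=
        hf.slope_mono_adjacent hx hz hxy hyz
      by_cases hxc : x ≤ c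
      · simp only [if_pos hxc]
        have h3 : f x ≤ g x := hge x hx hxc
        refine le_trans (div_le_div_of_nonneg_right (by linarith) hp.le) h2
      · simp only [if_neg hxc]
        exact h2

lemma glue_concave {s : Set ℝ} {f g : ℝ → ℝ} {c : ℝ}
    (hc : c ∈ s) (hf : ConcaveOn ℝ s f) (hg : ConcaveOn ℝ s g)
    (hle : ∀ x ∈ s, c ≤ x → g x ≤ f x) (heq : g c = f c) :
    ConcaveOn ℝ s (fun x => if c ≤ x then g x else f x) := by
  apply concaveOn_of_slope_anti_adjacent hf.1
  intro x y z hx hz hxy hyz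
  have hy : y ∈ s := hf.1.ordConnected.out hx hz ⟨hxy.le, hyz.le⟩
  have hp : (0:ℝ) < y - x := by linarith
  have hr : (0:ℝ) < z - y := by linarith
  by_cases hxc : c ≤ x
  · have hyc : c ≤ y := hxc.trans hxy.le
    have hzc : c ≤ z := hyc.trans hyz.le
    simp only [if_pos hzc, if_pos hyc, if_pos hxc]
    exact hg.slope_anti_adjacent hx hz hxy hyz
  · push_neg at hxc
    by_cases hyc : c ≤ y
    · simp only [if_pos hyc, if_neg (not_le.2 hxc)]
      rcases eq_or_lt_of_le hyc with rfl | hyc'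
      · have hzc : c ≤ z := le_of_lt hyz
        simp only [if_pos hzc, if_pos hyc]
        have h2 : (f z - f c) / (z - c) ≤ (f c - f x) / (c - x) :=
          hf.slope_anti_adjacent hx hz hxy hyz
        have h3 : g z ≤ f z := hle z hz hzc
        calc (g z - g c) / (z - c) ≤ (f z - f c) / (z - c) := by
              apply div_le_div_of_nonneg_right _ (by linarith)
              linarith [heq]
          _ ≤ (f c - f x) / (c - x) := h2
          _ = (g c - f x) / (c - x) := by rw [heq]
      · have hzc : c ≤ z := hyc.trans hyz.le
        simp only [if_pos hzc]
        have hq : (0:ℝ) < y - c := by linarith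
        have hs : (0:ℝ) < c - x := by linarith
        have h1 : (g z - g y) / (z - y) ≤ (g y - g c) / (y - c) :=
          hg.slope_anti_adjacent hc hz hyc' hyz
        have h2 : (f y - f c) / (y - c) ≤ (f c - f x) / (c - x) :=
          hf.slope_anti_adjacent hx hy hxc hyc'
        have h3 : g y ≤ f y := hle y hy hyc'.le
        rw [div_le_div_iff₀ hr hq] at h1
        rw [div_le_div_iff₀ hq hs] at h2
        rw [div_le_div_iff₀ hr hp]
        -- goal: (g z - g y) * (y - x) ≤ (g y - f x) * (z - y)
        have e2 : (g y - g c) * (c - x) ≤ (f c - f x) * (y - c) := by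
          have : (g y - g c) * (c - x) ≤ (f y - f c) * (c - x) := by
            apply mul_le_mul_of_nonneg_right _ hs.le
            linarith [heq]
          linarith [h2]
        have e3 : (g z - g y) * (y - c) * (c - x) ≤ (g y - g c) * (z - y) * (c - x) :=
          mul_le_mul_of_nonneg_right h1 hs.le
        have e4 : (g y - g c) * (c - x) * (z - y) ≤ (f c - f x) * (y - c) * (z - y) :=
          mul_le_mul_of_nonneg_right e2 hr.le
        have e6 : (g z - g y) * (c - x) ≤ (f c - f x) * (z - y) := by
          have e5 : ((g z - g y) * (c - x)) * (y - c) ≤ ((f c - f x) * (z - y)) * (y - c) := by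
            nlinarith [e3, e4]
          exact le_of_mul_le_mul_right e5 hq
        nlinarith [h1, e6, heq]
    · push_neg at hyc
      simp only [if_neg (not_le.2 hyc), if_neg (not_le.2 hxc)]
      have h2 : (f z - f y) / (z - y) ≤ (f y - f x) / (y - x) :=
        hf.slope_anti_adjacent hx hz hxy hyz
      by_cases hzc : c ≤ z
      · simp only [if_pos hzc]
        have h3 : g z ≤ f z := hle z hz hzc
        exact le_trans (div_le_div_of_nonneg_right (by linarith) hr.le) h2
      · simp only [if_neg hzc]
        exact h2

set_option maxHeartbeats 1000000 in
/-- (The cubic comparison construction of Lemma 5.8.) Let `f : [a,b] → ℝ`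
(`a < 0 < b`) be `C²` with `f(0) = f'(0) = 0`, `f'' > 0` on `(0,b]` and `f'' < 0` on `[a,0)`,
and let `g(x) = λ(x³ + x)`.  For all sufficiently small `λ > 0`: `g(b) < f(b)`, `g(a) > f(a)`,
there are maximal intervals `(0,b')` and `(a',0)` on which `g > f` resp. `g < f` (with
`a < a' < 0 < b' < b` and `g = f` at `a'`, `b'`), and the function `F` equal to `g` on
`[a',b']` and to `f` elsewhere is convex on `[0,b]`, concave on `[a,0]`, with `F''`
vanishing only at `0` where defined. -/
theorem stmt_8 (a b : ℝ) (ha : a < 0) (hb : 0 < b) (f f' f'' : ℝ → ℝ)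
    (hd1 : ∀ x ∈ Set.Icc a b, HasDerivWithinAt f (f' x) (Set.Icc a b) x)
    (hd2 : ∀ x ∈ Set.Icc a b, HasDerivWithinAt f' (f'' x) (Set.Icc a b) x)
    (hf''c : ContinuousOn f'' (Set.Icc a b))
    (hf0 : f 0 = 0) (hf'0 : f' 0 = 0)
    (hpos : ∀ x ∈ Set.Ioc 0 b, 0 < f'' x)
    (hneg : ∀ x ∈ Set.Ico a 0, f'' x < 0) :
    ∃ lam0 > (0 : ℝ), ∀ l : ℝ, 0 < l → l < lam0 →
      l * (b ^ 3 + b) < f b ∧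
      f a < l * (a ^ 3 + a) ∧
      ∃ a' b' : ℝ, a < a' ∧ a' < 0 ∧ 0 < b' ∧ b' < b ∧
        (∀ x ∈ Set.Ioo 0 b', f x < l * (x ^ 3 + x)) ∧
        l * (b' ^ 3 + b') = f b' ∧
        (∀ x ∈ Set.Ioo a' 0, l * (x ^ 3 + x) < f x) ∧
        l * (a' ^ 3 + a') = f a' ∧
        ∃ F : ℝ → ℝ,
          (∀ x, F x = if a' ≤ x ∧ x ≤ b' then l * (x ^ 3 + x) else f x) ∧
          ConvexOn ℝ (Set.Icc 0 b) F ∧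
          ConcaveOn ℝ (Set.Icc a 0) F ∧
          (∀ x ∈ Set.Icc a b, HasDerivAt (deriv F) 0 x → x = 0) := by
  have h0ab : (0:ℝ) ∈ Set.Icc a b := ⟨ha.le, hb.le⟩
  have hD1 : ∀ x ∈ Set.Ioo a b, HasDerivAt f (f' x) x := fun x hx =>
    (hd1 x ⟨hx.1.le, hx.2.le⟩).hasDerivAt (Icc_mem_nhds hx.1 hx.2)
  have hD2 : ∀ x ∈ Set.Ioo a b, HasDerivAt f' (f'' x) x := fun x hx =>
    (hd2 x ⟨hx.1.le, hx.2.le⟩).hasDerivAt (Icc_mem_nhds hx.1 hx.2)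
  have hfc : ContinuousOn f (Set.Icc a b) := fun x hx => (hd1 x hx).continuousWithinAt
  have hf'c : ContinuousOn f' (Set.Icc a b) := fun x hx => (hd2 x hx).continuousWithinAt
  have hsub1 : Set.Icc 0 b ⊆ Set.Icc a b := Set.Icc_subset_Icc ha.le le_rfl
  have hsub2 : Set.Icc a 0 ⊆ Set.Icc a b := Set.Icc_subset_Icc le_rfl hb.le
  have hIoo1 : Set.Ioo 0 b ⊆ Set.Ioo a b := Set.Ioo_subset_Ioo ha.le le_rfl
  have hIoo2 : Set.Ioo a 0 ⊆ Set.Ioo a b := Set.Ioo_subset_Ioo le_rfl hb.le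
  -- f' is positive on (0,b] and on [a,0)
  have hf'pos : ∀ x ∈ Set.Ioc 0 b, 0 < f' x := by
    have hmono : StrictMonoOn f' (Set.Icc 0 b) := by
      apply strictMonoOn_of_deriv_pos (convex_Icc 0 b) (hf'c.mono hsub1)
      intro x hx
      rw [interior_Icc] at hx
      rw [(hD2 x (hIoo1 hx)).deriv]
      exact hpos x ⟨hx.1, hx.2.le⟩
    intro x hx
    have := hmono ⟨le_rfl, hb.le⟩ ⟨hx.1.le, hx.2⟩ hx.1
    rwa [hf'0] at this
  have hf'pos' : ∀ x ∈ Set.Ico a 0, 0 < f' x := by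
    have hanti : StrictAntiOn f' (Set.Icc a 0) := by
      apply strictAntiOn_of_deriv_neg (convex_Icc a 0) (hf'c.mono hsub2)
      intro x hx
      rw [interior_Icc] at hx
      rw [(hD2 x (hIoo2 hx)).deriv]
      exact hneg x ⟨hx.1.le, hx.2⟩
    intro x hx
    have := hanti ⟨hx.1, hx.2.le⟩ ⟨ha.le, le_rfl⟩ hx.2
    rwa [hf'0] at this
  -- f b > 0 and f a < 0
  have hfb : 0 < f b := by
    have hmono : StrictMonoOn f (Set.Icc 0 b) := by
      apply strictMonoOn_of_deriv_pos (convex_Icc 0 b) (hfc.mono hsub1)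
      intro x hx
      rw [interior_Icc] at hx
      rw [(hD1 x (hIoo1 hx)).deriv]
      exact hf'pos x ⟨hx.1, hx.2.le⟩
    have := hmono ⟨le_rfl, hb.le⟩ ⟨hb.le, le_rfl⟩ hb
    rwa [hf0] at this
  have hfa : f a < 0 := by
    have hmono : StrictMonoOn f (Set.Icc a 0) := by
      apply strictMonoOn_of_deriv_pos (convex_Icc a 0) (hfc.mono hsub2)
      intro x hx
      rw [interior_Icc] at hx
      rw [(hD1 x (hIoo2 hx)).deriv]
      exact hf'pos' x ⟨hx.1.le, hx.2⟩
    have := hmono ⟨le_rfl, ha.le⟩ ⟨ha.le, le_rfl⟩ ha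
    rwa [hf0] at this
  -- convexity/concavity of f
  have hfconv : ConvexOn ℝ (Set.Icc 0 b) f := by
    apply convexOn_of_hasDerivWithinAt2_nonneg (convex_Icc 0 b) (hfc.mono hsub1)
      (f' := f') (f'' := f'')
    · intro x hx; rw [interior_Icc] at hx ⊢
      exact (hD1 x (hIoo1 hx)).hasDerivWithinAt
    · intro x hx; rw [interior_Icc] at hx ⊢
      exact (hD2 x (hIoo1 hx)).hasDerivWithinAt
    · intro x hx; rw [interior_Icc] at hx
      exact (hpos x ⟨hx.1, hx.2.le⟩).le
  have hfconc : ConcaveOn ℝ (Set.Icc a 0) f := by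
    apply concaveOn_of_hasDerivWithinAt2_nonpos (convex_Icc a 0) (hfc.mono hsub2)
      (f' := f') (f'' := f'')
    · intro x hx; rw [interior_Icc] at hx ⊢
      exact (hD1 x (hIoo2 hx)).hasDerivWithinAt
    · intro x hx; rw [interior_Icc] at hx ⊢
      exact (hD2 x (hIoo2 hx)).hasDerivWithinAt
    · intro x hx; rw [interior_Icc] at hx
      exact (hneg x ⟨hx.1.le, hx.2⟩).le
  have hbb : (0:ℝ) < b ^ 3 + b := by positivity
  have haa : a ^ 3 + a < 0 := by nlinarith [mul_pos (mul_pos (neg_pos.2 ha) (neg_pos.2 ha)) (neg_pos.2 ha)]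
  refine ⟨min (f b / (b ^ 3 + b)) (f a / (a ^ 3 + a)), lt_min (div_pos hfb hbb) (div_pos_of_neg_of_neg hfa haa), ?_⟩
  intro l hl hll
  have hgb : l * (b ^ 3 + b) < f b := by
    have h1 : l < f b / (b ^ 3 + b) := lt_of_lt_of_le hll (min_le_left _ _)
    exact (lt_div_iff₀ hbb).1 h1
  have hga : f a < l * (a ^ 3 + a) := by
    have h1 : l < f a / (a ^ 3 + a) := lt_of_lt_of_le hll (min_le_right _ _)
    have h2 := mul_lt_mul_of_neg_right h1 haa
    rwa [div_mul_cancel₀ _ haa.ne] at h2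
  refine ⟨hgb, hga, ?_⟩
  set g : ℝ → ℝ := fun x => l * (x ^ 3 + x) with hgdef
  have hg' : ∀ y : ℝ, HasDerivAt g (l * (3 * y ^ 2 + 1)) y := by
    intro y
    have h1 : HasDerivAt (fun t : ℝ => t ^ 3 + t) (3 * y ^ 2 + 1) y := by
      have := (hasDerivAt_pow 3 y).add (hasDerivAt_id y); simp at this; exact this
    exact h1.const_mul l
  have hgc : Continuous g := by
    have : Continuous fun x : ℝ => x ^ 3 + x := by continuity
    exact continuous_const.mul this
  have hg0 : g 0 = 0 := by simp [hgdef]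
  -- near 0 on the right : f < g on (0, min δ b]
  obtain ⟨δ, hδ0, hδ⟩ : ∃ δ > 0, ∀ x ∈ Set.Icc a b, |x| < δ → |f' x| < l / 2 := by
    have hcw : ContinuousWithinAt f' (Set.Icc a b) 0 := hf'c 0 h0ab
    rw [Metric.continuousWithinAt_iff] at hcw
    obtain ⟨δ, hδ0, hδ⟩ := hcw (l / 2) (by linarith)
    exact ⟨δ, hδ0, fun x hx hxδ => by
      simpa [Real.dist_eq, hf'0] using hδ hx (by simpa [Real.dist_eq] using hxδ)⟩
  set t : ℝ := min δ b with htdef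
  have ht0 : 0 < t := lt_min hδ0 hb
  have htb : t ≤ b := min_le_right _ _
  have hsubt : Set.Icc 0 t ⊆ Set.Icc a b := Set.Icc_subset_Icc ha.le htb
  have hnear : ∀ x ∈ Set.Ioc 0 t, f x < g x := by
    have hmono : StrictMonoOn (fun x => g x - f x) (Set.Icc 0 t) := by
      apply strictMonoOn_of_deriv_pos (convex_Icc 0 t)
        (hgc.continuousOn.sub (hfc.mono hsubt))
      intro x hx
      rw [interior_Icc] at hx
      have hxab : x ∈ Set.Ioo a b := ⟨ha.trans hx.1, lt_of_lt_of_le hx.2 htb⟩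
      rw [((hg' x).sub (hD1 x hxab)).deriv]
      have : |f' x| < l / 2 := hδ x ⟨hxab.1.le, hxab.2.le⟩
        (by rw [abs_of_pos hx.1]; exact lt_of_lt_of_le hx.2 (min_le_left _ _))
      have h2 := abs_lt.1 this
      nlinarith [sq_nonneg x]
    intro x hx
    have := hmono ⟨le_rfl, ht0.le⟩ ⟨hx.1.le, hx.2⟩ hx.1
    simp only [hg0, hf0, sub_zero] at this
    linarith [this]
  -- near 0 on the left : f > g on [max (-δ) a, 0)
  set t' : ℝ := max (-δ) a with ht'def
  have ht'0 : t' < 0 := max_lt (by linarith) ha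
  have hat' : a ≤ t' := le_max_right _ _
  have hsubt' : Set.Icc t' 0 ⊆ Set.Icc a b := Set.Icc_subset_Icc hat' hb.le
  have hnear' : ∀ x ∈ Set.Ico t' 0, g x < f x := by
    have hanti : StrictAntiOn (fun x => f x - g x) (Set.Icc t' 0) := by
      apply strictAntiOn_of_deriv_neg (convex_Icc t' 0)
        ((hfc.mono hsubt').sub hgc.continuousOn)
      intro x hx
      rw [interior_Icc] at hx
      have hxab : x ∈ Set.Ioo a b := ⟨lt_of_le_of_lt hat' hx.1, hx.2.trans hb⟩
      rw [((hD1 x hxab).sub (hg' x)).deriv]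
      have : |f' x| < l / 2 := hδ x ⟨hxab.1.le, hxab.2.le⟩
        (by rw [abs_of_neg hx.2]; have := le_max_left (-δ) a; linarith [hx.1])
      have h2 := abs_lt.1 this
      nlinarith [sq_nonneg x]
    intro x hx
    have := hanti ⟨hx.1, hx.2.le⟩ ⟨ht'0.le, le_rfl⟩ hx.2
    simp only [hg0, hf0, sub_zero] at this
    linarith [this]
  -- the first crossing point on the right
  set Sb : Set ℝ := {x | x ∈ Set.Ioc 0 b ∧ g x ≤ f x} with hSbdef
  have hbSb : b ∈ Sb := ⟨⟨hb, le_rfl⟩, hgb.le⟩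
  have hSbne : Sb.Nonempty := ⟨b, hbSb⟩
  have hSbbdd : BddBelow Sb := ⟨0, fun x hx => hx.1.1.le⟩
  set b' : ℝ := sInf Sb with hb'def
  have hSbsub : Sb ⊆ Set.Icc t b ∩ (fun x => f x - g x) ⁻¹' Set.Ici 0 := by
    intro x hx
    refine ⟨⟨?_, hx.1.2⟩, by simpa using hx.2⟩
    by_contra hxt
    push_neg at hxt
    exact absurd hx.2 (not_le.2 (hnear x ⟨hx.1.1, hxt.le⟩))
  have hTclosed : IsClosed (Set.Icc t b ∩ (fun x => f x - g x) ⁻¹' Set.Ici 0) :=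
    ContinuousOn.preimage_isClosed_of_isClosed
      ((hfc.mono (Set.Icc_subset_Icc (ha.le.trans ht0.le) le_rfl)).sub hgc.continuousOn)
      isClosed_Icc isClosed_Ici
  have hb'T : b' ∈ Set.Icc t b ∩ (fun x => f x - g x) ⁻¹' Set.Ici 0 :=
    (closure_minimal hSbsub hTclosed) (csInf_mem_closure hSbne hSbbdd)
  have hb'pos : 0 < b' := lt_of_lt_of_le ht0 hb'T.1.1
  have hb'leb : b' ≤ b := hb'T.1.2
  have hltb' : ∀ x ∈ Set.Ioo 0 b', f x < g x := by
    intro x hx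
    have hxb : x ∈ Set.Ioc 0 b := ⟨hx.1, (hx.2.trans_le hb'leb).le⟩
    by_contra hge
    push_neg at hge
    exact absurd (csInf_le hSbbdd ⟨hxb, hge⟩) (not_le.2 hx.2)
  have heqb' : g b' = f b' := by
    have h1 : g b' ≤ f b' := by
      have := hb'T.2
      simp only [Set.mem_preimage, Set.mem_Ici, sub_nonneg] at this
      exact this
    refine le_antisymm h1 ?_
    have hne : (𝓝[Set.Ioo 0 b'] b').NeBot := by
      rw [← mem_closure_iff_nhdsWithin_neBot, closure_Ioo hb'pos.ne]
      exact ⟨hb'pos.le, le_rfl⟩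
    have hcw : ContinuousWithinAt (fun x => g x - f x) (Set.Ioo 0 b') b' := by
      apply ContinuousWithinAt.sub hgc.continuousAt.continuousWithinAt
      exact (hfc b' ⟨ha.le.trans hb'pos.le, hb'leb⟩).mono
        (fun x hx => ⟨ha.le.trans hx.1.le, hx.2.le.trans hb'leb⟩)
    have h2 : 0 ≤ g b' - f b' := ge_of_tendsto hcw.tendsto
      (eventually_mem_nhdsWithin.mono (fun x hx => (sub_nonneg.2 (hltb' x hx).le)))
    linarith [h2]
  have hb'ltb : b' < b := by
    rcases lt_or_eq_of_le hb'leb with h | h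
    · exact h
    · exfalso; rw [h] at heqb'; exact absurd heqb'.symm.le (not_le.2 hgb)
  -- the first crossing point on the left
  set Sa : Set ℝ := {x | x ∈ Set.Ico a 0 ∧ f x ≤ g x} with hSadef
  have haSa : a ∈ Sa := ⟨⟨le_rfl, ha⟩, hga.le⟩
  have hSane : Sa.Nonempty := ⟨a, haSa⟩
  have hSabdd : BddAbove Sa := ⟨0, fun x hx => hx.1.2.le⟩
  set a' : ℝ := sSup Sa with ha'def
  have hSasub : Sa ⊆ Set.Icc a t' ∩ (fun x => g x - f x) ⁻¹' Set.Ici 0 := by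
    intro x hx
    refine ⟨⟨hx.1.1, ?_⟩, by simpa using hx.2⟩
    by_contra hxt
    push_neg at hxt
    exact absurd hx.2 (not_le.2 (hnear' x ⟨hxt.le, hx.1.2⟩))
  have hT'closed : IsClosed (Set.Icc a t' ∩ (fun x => g x - f x) ⁻¹' Set.Ici 0) :=
    ContinuousOn.preimage_isClosed_of_isClosed
      (hgc.continuousOn.sub (hfc.mono (Set.Icc_subset_Icc le_rfl (ht'0.le.trans hb.le))))
      isClosed_Icc isClosed_Ici
  have ha'T : a' ∈ Set.Icc a t' ∩ (fun x => g x - f x) ⁻¹' Set.Ici 0 :=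
    (closure_minimal hSasub hT'closed) (csSup_mem_closure hSane hSabdd)
  have ha'neg : a' < 0 := lt_of_le_of_lt ha'T.1.2 ht'0
  have halea' : a ≤ a' := ha'T.1.1
  have hlta' : ∀ x ∈ Set.Ioo a' 0, g x < f x := by
    intro x hx
    have hxa : x ∈ Set.Ico a 0 := ⟨(halea'.trans hx.1.le), hx.2⟩
    by_contra hge
    push_neg at hge
    exact absurd (le_csSup hSabdd ⟨hxa, hge⟩) (not_le.2 hx.1)
  have heqa' : g a' = f a' := by
    have h1 : f a' ≤ g a' := by
      have := ha'T.2
      simp only [Set.mem_preimage, Set.mem_Ici, sub_nonneg] at this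
      exact this
    refine le_antisymm ?_ h1
    have hne : (𝓝[Set.Ioo a' 0] a').NeBot := by
      rw [← mem_closure_iff_nhdsWithin_neBot, closure_Ioo ha'neg.ne]
      exact ⟨le_rfl, ha'neg.le⟩
    have hcw : ContinuousWithinAt (fun x => f x - g x) (Set.Ioo a' 0) a' := by
      apply ContinuousWithinAt.sub _ hgc.continuousAt.continuousWithinAt
      exact (hfc a' ⟨halea', ha'neg.le.trans hb.le⟩).mono
        (fun x hx => ⟨halea'.trans hx.1.le, (hx.2.le.trans hb.le)⟩)
    have h2 : 0 ≤ f a' - g a' := ge_of_tendsto hcw.tendsto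
      (eventually_mem_nhdsWithin.mono (fun x hx => (sub_nonneg.2 (hlta' x hx).le)))
    linarith [h2]
  have haalt : a < a' := by
    rcases lt_or_eq_of_le halea' with h | h
    · exact h
    · exfalso; rw [← h] at heqa'; exact absurd heqa'.le (not_le.2 hga)
  refine ⟨a', b', haalt, ha'neg, hb'pos, hb'ltb,
    fun x hx => hltb' x hx, heqb'.symm ▸ rfl, fun x hx => hlta' x hx, heqa'.symm ▸ rfl, ?_⟩
  have hg2 : ∀ y : ℝ, HasDerivAt (fun y : ℝ => l * (3 * y ^ 2 + 1)) (l * (6 * y)) y := by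
    intro y
    have h1 : HasDerivAt (fun t : ℝ => 3 * t ^ 2 + 1) (6 * y) y := by
      have := ((hasDerivAt_pow 2 y).const_mul (3:ℝ)).add_const 1
      exact this.congr_deriv (by push_cast; ring)
    exact h1.const_mul l
  have hgconv : ConvexOn ℝ (Set.Icc 0 b) g := by
    apply convexOn_of_hasDerivWithinAt2_nonneg (convex_Icc 0 b) hgc.continuousOn
      (f' := fun y => l * (3 * y ^ 2 + 1)) (f'' := fun y => l * (6 * y))
    · intro x hx; exact (hg' x).hasDerivWithinAt
    · intro x hx; exact (hg2 x).hasDerivWithinAt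
    · intro x hx; rw [interior_Icc] at hx
      have := hx.1; positivity
  have hgconc : ConcaveOn ℝ (Set.Icc a 0) g := by
    apply concaveOn_of_hasDerivWithinAt2_nonpos (convex_Icc a 0) hgc.continuousOn
      (f' := fun y => l * (3 * y ^ 2 + 1)) (f'' := fun y => l * (6 * y))
    · intro x hx; exact (hg' x).hasDerivWithinAt
    · intro x hx; exact (hg2 x).hasDerivWithinAt
    · intro x hx; rw [interior_Icc] at hx
      exact mul_nonpos_of_nonneg_of_nonpos hl.le (by nlinarith [hx.2])
  have hgge : ∀ x ∈ Set.Icc 0 b, x ≤ b' → f x ≤ g x := by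
    intro x hx hxb
    rcases hx.1.eq_or_lt with h0 | h0
    · rw [← h0, hf0, hg0]
    · rcases hxb.lt_or_eq with h1 | h1
      · exact (hltb' x ⟨h0, h1⟩).le
      · rw [h1]; exact heqb'.ge
  have hgle : ∀ x ∈ Set.Icc a 0, a' ≤ x → g x ≤ f x := by
    intro x hx hxa
    rcases hx.2.lt_or_eq with h0 | h0
    · rcases hxa.lt_or_eq with h1 | h1
      · exact (hlta' x ⟨h1, h0⟩).le
      · rw [← h1]; exact heqa'.le
    · rw [h0, hf0, hg0]
  set F : ℝ → ℝ := fun x => if a' ≤ x ∧ x ≤ b' then g x else f x with hFdef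
  have hFconv : ConvexOn ℝ (Set.Icc 0 b) F := by
    have h := glue_convex (s := Set.Icc 0 b) (c := b') ⟨hb'pos.le, hb'leb⟩ hfconv hgconv hgge heqb'
    apply convexOn_congr h
    intro x hx
    by_cases hxb : x ≤ b' <;>
      simp [hFdef, hxb, (ha'neg.le.trans hx.1 : a' ≤ x)]
  have hFconc : ConcaveOn ℝ (Set.Icc a 0) F := by
    have h := glue_concave (s := Set.Icc a 0) (c := a') ⟨halea', ha'neg.le⟩ hfconc hgconc hgle heqa'
    apply concaveOn_congr h
    intro x hx
    by_cases hxa : a' ≤ x <;>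
      simp [hFdef, hxa, (hx.2.trans hb'pos.le : x ≤ b')]
  refine ⟨F, fun x => rfl, hFconv, hFconc, ?_⟩
  have ha'ltb' : a' < b' := ha'neg.trans hb'pos
  intro x hx hder
  have hdgF : ∀ y ∈ Set.Ioo a' b', deriv F y = l * (3 * y ^ 2 + 1) := by
    intro y hy
    have hFeq : F =ᶠ[𝓝 y] g := (isOpen_Ioo.eventually_mem hy).mono
      (fun z hz => if_pos ⟨hz.1.le, hz.2.le⟩)
    rw [hFeq.deriv_eq, (hg' y).deriv]
  have hdfR : ∀ y ∈ Set.Ioo b' b, deriv F y = f' y := by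
    intro y hy
    have hFeq : F =ᶠ[𝓝 y] f := (isOpen_Ioi.eventually_mem (hy.1 : y ∈ Set.Ioi b')).mono
      (fun z hz => if_neg (fun hzz => absurd hzz.2 (not_le.2 hz)))
    rw [hFeq.deriv_eq, (hD1 y ⟨ha.trans (hb'pos.trans hy.1), hy.2⟩).deriv]
  have hdfL : ∀ y ∈ Set.Ioo a a', deriv F y = f' y := by
    intro y hy
    have hFeq : F =ᶠ[𝓝 y] f := (isOpen_Iio.eventually_mem (hy.2 : y ∈ Set.Iio a')).mono
      (fun z hz => if_neg (fun hzz => absurd hzz.1 (not_le.2 hz)))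
    rw [hFeq.deriv_eq, (hD1 y ⟨hy.1, (hy.2.trans ha'neg).trans hb⟩).deriv]
  by_contra hx0
  rcases eq_or_lt_of_le hx.2 with hxb | hxb
  · -- x = b (x renamed to b)
    subst hxb
    have hcont : ContinuousAt (deriv F) x := hder.differentiableAt.continuousAt
    have hev : deriv F =ᶠ[𝓝[<] x] f' :=
      Filter.eventuallyEq_of_mem (Ioo_mem_nhdsLT_of_mem ⟨hb'ltb, le_rfl⟩) hdfR
    have ht1 : Tendsto (deriv F) (𝓝[<] x) (𝓝 (deriv F x)) :=
      hcont.continuousWithinAt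
    have ht2 : Tendsto f' (𝓝[<] x) (𝓝 (f' x)) :=
      (hf'c x ⟨ha.le.trans hb.le, le_rfl⟩).mono_of_mem_nhdsWithin
        (Filter.mem_of_superset (Ioo_mem_nhdsLT_of_mem ⟨ha.trans hb, le_rfl⟩)
          Set.Ioo_subset_Icc_self)
    have hval : deriv F x = f' x := tendsto_nhds_unique (ht1.congr' hev) ht2
    have hw2 : HasDerivWithinAt f' 0 (Set.Iio x) x :=
      hder.hasDerivWithinAt.congr_of_eventuallyEq hev.symm hval.symm
    have hw3 : HasDerivWithinAt f' (f'' x) (Set.Iio x) x :=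
      (hd2 x ⟨ha.le.trans hb.le, le_rfl⟩).mono_of_mem_nhdsWithin
        (Filter.mem_of_superset (Ioo_mem_nhdsLT_of_mem ⟨ha.trans hb, le_rfl⟩)
          Set.Ioo_subset_Icc_self)
    have h6 : (0:ℝ) = f'' x :=
      UniqueDiffWithinAt.eq_deriv _ (uniqueDiffWithinAt_Iio x) hw2 hw3
    exact absurd h6.symm (ne_of_gt (hpos x ⟨hb, le_rfl⟩))
  rcases eq_or_lt_of_le hx.1 with hxa | hxa
  · -- x = a
    subst hxa
    have hcont : ContinuousAt (deriv F) a := hder.differentiableAt.continuousAt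
    have hev : deriv F =ᶠ[𝓝[>] a] f' :=
      Filter.eventuallyEq_of_mem (Ioo_mem_nhdsGT_of_mem ⟨le_rfl, haalt⟩) hdfL
    have ht1 : Tendsto (deriv F) (𝓝[>] a) (𝓝 (deriv F a)) :=
      hcont.continuousWithinAt
    have ht2 : Tendsto f' (𝓝[>] a) (𝓝 (f' a)) :=
      (hf'c a ⟨le_rfl, ha.le.trans hb.le⟩).mono_of_mem_nhdsWithin
        (Filter.mem_of_superset (Ioo_mem_nhdsGT_of_mem ⟨le_rfl, ha.trans hb⟩)
          Set.Ioo_subset_Icc_self)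
    have hval : deriv F a = f' a := tendsto_nhds_unique (ht1.congr' hev) ht2
    have hw2 : HasDerivWithinAt f' 0 (Set.Ioi a) a :=
      hder.hasDerivWithinAt.congr_of_eventuallyEq hev.symm hval.symm
    have hw3 : HasDerivWithinAt f' (f'' a) (Set.Ioi a) a :=
      (hd2 a ⟨le_rfl, ha.le.trans hb.le⟩).mono_of_mem_nhdsWithin
        (Filter.mem_of_superset (Ioo_mem_nhdsGT_of_mem ⟨le_rfl, ha.trans hb⟩)
          Set.Ioo_subset_Icc_self)
    have h6 : (0:ℝ) = f'' a :=
      UniqueDiffWithinAt.eq_deriv _ (uniqueDiffWithinAt_Ioi a) hw2 hw3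
    exact absurd h6.symm (ne_of_lt (hneg a ⟨le_rfl, ha⟩))
  rcases lt_trichotomy x b' with h1 | h1 | h1
  · rcases lt_trichotomy x a' with h2 | h2 | h2
    · -- a < x < a'
      have hev : deriv F =ᶠ[𝓝 x] f' :=
        (isOpen_Ioo.eventually_mem (⟨hxa, h2⟩ : x ∈ Set.Ioo a a')).mono hdfL
      have h3 : HasDerivAt f' 0 x := hder.congr_of_eventuallyEq hev.symm
      have h4 : f'' x = 0 := (hD2 x ⟨hxa, hxb⟩).unique h3
      exact absurd h4 (ne_of_lt (hneg x ⟨hx.1, h2.trans ha'neg⟩))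
    · -- x = a'
      subst h2
      have hcont : ContinuousAt (deriv F) a' := hder.differentiableAt.continuousAt
      have hev : deriv F =ᶠ[𝓝[>] a'] (fun y => l * (3 * y ^ 2 + 1)) :=
        Filter.eventuallyEq_of_mem (Ioo_mem_nhdsGT_of_mem ⟨le_rfl, ha'ltb'⟩) hdgF
      have ht1 : Tendsto (deriv F) (𝓝[>] a') (𝓝 (deriv F a')) :=
        hcont.continuousWithinAt
      have ht2 : Tendsto (fun y => l * (3 * y ^ 2 + 1)) (𝓝[>] a')
          (𝓝 (l * (3 * a' ^ 2 + 1))) := (hg2 a').continuousAt.continuousWithinAt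
      have hval : deriv F a' = l * (3 * a' ^ 2 + 1) :=
        tendsto_nhds_unique (ht1.congr' hev) ht2
      have hw2 : HasDerivWithinAt (fun y => l * (3 * y ^ 2 + 1)) 0 (Set.Ioi a') a' :=
        hder.hasDerivWithinAt.congr_of_eventuallyEq hev.symm hval.symm
      have hw3 : HasDerivWithinAt (fun y => l * (3 * y ^ 2 + 1)) (l * (6 * a')) (Set.Ioi a') a' :=
        (hg2 a').hasDerivWithinAt
      have h6 : (0:ℝ) = l * (6 * a') :=
        UniqueDiffWithinAt.eq_deriv _ (uniqueDiffWithinAt_Ioi a') hw2 hw3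
      nlinarith [mul_neg_of_pos_of_neg hl (show 6 * a' < 0 by linarith [ha'neg])]
    · -- a' < x < b' : cubic region
      have hev : deriv F =ᶠ[𝓝 x] (fun y => l * (3 * y ^ 2 + 1)) :=
        (isOpen_Ioo.eventually_mem (⟨h2, h1⟩ : x ∈ Set.Ioo a' b')).mono hdgF
      have h3 : HasDerivAt (fun y => l * (3 * y ^ 2 + 1)) 0 x :=
        hder.congr_of_eventuallyEq hev.symm
      have h4 : l * (6 * x) = 0 := (hg2 x).unique h3
      rcases mul_eq_zero.1 h4 with h5 | h5
      · exact absurd h5 hl.ne'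
      · exact hx0 (by linarith)
  · -- x = b'
    subst h1
    have hcont : ContinuousAt (deriv F) b' := hder.differentiableAt.continuousAt
    have hev : deriv F =ᶠ[𝓝[<] b'] (fun y => l * (3 * y ^ 2 + 1)) :=
      Filter.eventuallyEq_of_mem (Ioo_mem_nhdsLT_of_mem ⟨ha'ltb', le_rfl⟩) hdgF
    have ht1 : Tendsto (deriv F) (𝓝[<] b') (𝓝 (deriv F b')) :=
      hcont.continuousWithinAt
    have ht2 : Tendsto (fun y => l * (3 * y ^ 2 + 1)) (𝓝[<] b')
        (𝓝 (l * (3 * b' ^ 2 + 1))) := (hg2 b').continuousAt.continuousWithinAt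
    have hval : deriv F b' = l * (3 * b' ^ 2 + 1) :=
      tendsto_nhds_unique (ht1.congr' hev) ht2
    have hw2 : HasDerivWithinAt (fun y => l * (3 * y ^ 2 + 1)) 0 (Set.Iio b') b' :=
      hder.hasDerivWithinAt.congr_of_eventuallyEq hev.symm hval.symm
    have hw3 : HasDerivWithinAt (fun y => l * (3 * y ^ 2 + 1)) (l * (6 * b')) (Set.Iio b') b' :=
      (hg2 b').hasDerivWithinAt
    have h6 : (0:ℝ) = l * (6 * b') :=
      UniqueDiffWithinAt.eq_deriv _ (uniqueDiffWithinAt_Iio b') hw2 hw3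
    nlinarith [mul_pos hl (show 0 < 6 * b' by linarith [hb'pos])]
  · -- b' < x < b
    have hev : deriv F =ᶠ[𝓝 x] f' :=
      (isOpen_Ioo.eventually_mem (⟨h1, hxb⟩ : x ∈ Set.Ioo b' b)).mono hdfR
    have h3 : HasDerivAt f' 0 x := hder.congr_of_eventuallyEq hev.symm
    have h4 : f'' x = 0 := (hD2 x ⟨hxa, hxb⟩).unique h3
    exact absurd h4 (ne_of_gt (hpos x ⟨hb'pos.trans h1, hx.2⟩))
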